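/- Let X and Y be complex Banach spaces and T : X → Y a compact linear operator with ‖T‖ ≤ 1. For each n ∈ ℕ let (x_k^{(n)})_{k∈ℤ} be a family in X such that for every sequence (λ_k)_{k∈ℤ} of complex numbers with |λ_k| ≤ 1 for all k, the series Σ_{k∈ℤ} λ_k x_k^{(n)} converges in X and has norm at most 1. If lim_{n→∞} sup_{k∈ℤ} ‖T x_k^{(n)}‖_Y = 0, then lim_{n→∞} ∫₀^{2π} ‖Σ_{k∈ℤ} e^{ikt} T x_k^{(n)}‖_Y² dt/2π = 0. -/

import Mathlib

open MeasureTheory Filter Topology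

lemma norm_exp_I_int (k : ℤ) (t : ℝ) : ‖Complex.exp (Complex.I * k * t)‖ = 1 := by
  rw [Complex.norm_exp]
  simp [Complex.mul_re]

lemma orth_int (m : ℤ) :
    ∫ t in (0:ℝ)..(2*Real.pi), Complex.exp (Complex.I * m * t)
      = if m = 0 then (2*Real.pi : ℂ) else 0 := by
  rcases eq_or_ne m 0 with h | h
  · simp [h, Complex.ofReal_mul]
  · have hc : (Complex.I * m) ≠ 0 := by
      simp [Complex.I_ne_zero, Complex.ext_iff, h]
    rw [if_neg h]
    have := integral_exp_mul_complex (a := (0:ℝ)) (b := 2*Real.pi) hc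
    simp only [mul_assoc] at this ⊢
    have h1 : Complex.exp (Complex.I * (m * ((2*Real.pi : ℝ) : ℂ))) = 1 := by
      push_cast
      rw [show Complex.I * ((m:ℂ) * (2*(Real.pi:ℂ))) = (m:ℤ) * (2*Real.pi*Complex.I) by push_cast; ring]
      exact Complex.exp_int_mul_two_pi_mul_I m
    rw [this, h1]
    simp

lemma summable_exp_mul {c : ℤ → ℂ} (hc : Summable fun k => ‖c k‖) (t : ℝ) :
    Summable fun k : ℤ => Complex.exp (Complex.I * k * t) * c k := by
  apply Summable.of_norm
  simp only [norm_mul, norm_exp_I_int, one_mul]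
  exact hc

lemma continuous_g {c : ℤ → ℂ} (hc : Summable fun k => ‖c k‖) :
    Continuous fun t : ℝ => ∑' k : ℤ, Complex.exp (Complex.I * k * t) * c k := by
  apply continuous_tsum (u := fun k => ‖c k‖) _ hc
  · intro k t
    simp only [norm_mul, norm_exp_I_int, one_mul, le_refl]
  · intro k
    exact (((continuous_const.mul Complex.continuous_ofReal).cexp).mul continuous_const)

lemma norm_g_le {c : ℤ → ℂ} (hc : Summable fun k => ‖c k‖) (t : ℝ) :
    ‖∑' k : ℤ, Complex.exp (Complex.I * k * t) * c k‖ ≤ ∑' k, ‖c k‖ := by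
  refine (norm_tsum_le_tsum_norm ?_).trans ?_
  · simp only [norm_mul, norm_exp_I_int, one_mul]
    exact hc
  · refine le_of_eq (tsum_congr fun k => ?_)
    simp only [norm_mul, norm_exp_I_int, one_mul]

lemma lint_bound {F : ℤ → ℝ → ℂ} {b : ℤ → ℝ} (hb : Summable b)
    (h : ∀ k t, ‖F k t‖ ≤ b k) :
    ∑' k : ℤ, ∫⁻ t in Set.Ioc (0:ℝ) (2*Real.pi), ‖F k t‖₊ ∂volume ≠ ⊤ := by
  have hb0 : ∀ k, 0 ≤ b k := fun k => (norm_nonneg _).trans (h k 0)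
  have h1 : ∀ k : ℤ, ∫⁻ t in Set.Ioc (0:ℝ) (2*Real.pi), (‖F k t‖₊ : ENNReal) ∂volume
      ≤ ENNReal.ofReal (b k) * ENNReal.ofReal (2*Real.pi) := by
    intro k
    calc ∫⁻ t in Set.Ioc (0:ℝ) (2*Real.pi), (‖F k t‖₊ : ENNReal) ∂volume
        ≤ ∫⁻ _ in Set.Ioc (0:ℝ) (2*Real.pi), ENNReal.ofReal (b k) ∂volume := by
          apply lintegral_mono; intro t
          show (‖F k t‖₊ : ENNReal) ≤ ENNReal.ofReal (b k)
          rw [← enorm_eq_nnnorm, ← ofReal_norm_eq_enorm]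
          exact ENNReal.ofReal_le_ofReal (h k t)
      _ = ENNReal.ofReal (b k) * volume (Set.Ioc (0:ℝ) (2*Real.pi)) := by
          rw [MeasureTheory.lintegral_const, Measure.restrict_apply MeasurableSet.univ,
            Set.univ_inter]
      _ ≤ _ := by
          rw [Real.volume_Ioc]
          simp
  refine ne_top_of_le_ne_top ?_ (ENNReal.tsum_le_tsum h1)
  rw [ENNReal.tsum_mul_right, ← ENNReal.ofReal_tsum_of_nonneg hb0 hb]
  exact ENNReal.mul_ne_top ENNReal.ofReal_ne_top ENNReal.ofReal_ne_top

lemma meas_tsum {Z : Type*} [NormedAddCommGroup Z] [NormedSpace ℂ Z] (v : ℤ → Z)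
    (hv : ∀ t : ℝ, Summable fun k : ℤ => Complex.exp (Complex.I * k * t) • v k) :
    StronglyMeasurable fun t : ℝ => ∑' k : ℤ, Complex.exp (Complex.I * k * t) • v k := by
  have hmono : Monotone (fun N : ℕ => Finset.Icc (-(N:ℤ)) (N:ℤ)) := by
    intro a b hab
    apply Finset.Icc_subset_Icc <;> omega
  have hten : Tendsto (fun N : ℕ => Finset.Icc (-(N:ℤ)) (N:ℤ)) atTop atTop := by
    apply tendsto_atTop_finset_of_monotone hmono
    intro k
    refine ⟨k.natAbs, Finset.mem_Icc.2 ⟨?_, ?_⟩⟩ <;> omega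
  apply stronglyMeasurable_of_tendsto (f := fun (N : ℕ) (t : ℝ) =>
    ∑ k ∈ Finset.Icc (-(N:ℤ)) (N:ℤ), Complex.exp (Complex.I * k * t) • v k) atTop
  · intro N
    apply Continuous.stronglyMeasurable
    apply continuous_finset_sum
    intro k _
    exact ((continuous_const.mul Complex.continuous_ofReal).cexp).smul continuous_const
  · rw [tendsto_pi_nhds]
    intro t
    exact ((hv t).hasSum).comp hten

lemma parseval_core {c : ℤ → ℂ} (hc : Summable fun k => ‖c k‖) :
    ∫ t in (0:ℝ)..(2*Real.pi), ‖∑' k : ℤ, Complex.exp (Complex.I * k * t) * c k‖^2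
      = 2 * Real.pi * ∑' k : ℤ, ‖c k‖^2 := by
  have hpi : (0:ℝ) ≤ 2*Real.pi := by positivity
  set S := ∑' k : ℤ, ‖c k‖ with hS
  set g : ℝ → ℂ := fun t => ∑' k : ℤ, Complex.exp (Complex.I * k * t) * c k with hg
  have hgc : Continuous g := continuous_g hc
  have hgle : ∀ t, ‖g t‖ ≤ S := norm_g_le hc
  -- expansion of the conjugate
  have hconj : ∀ t : ℝ, (starRingEnd ℂ) (g t)
      = ∑' l : ℤ, Complex.exp (-(Complex.I * l * t)) * (starRingEnd ℂ) (c l) := by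
    intro t
    rw [hg, starRingEnd_apply, tsum_star]
    apply tsum_congr; intro l
    rw [← starRingEnd_apply, map_mul, ← Complex.exp_conj]
    congr 2
    simp only [map_mul, Complex.conj_I, map_intCast, Complex.conj_ofReal]
    ring
  -- inner orthogonality integral
  have hinner : ∀ k : ℤ,
      (∫ t in Set.Ioc (0:ℝ) (2*Real.pi), Complex.exp (Complex.I * k * t) * (starRingEnd ℂ) (g t))
        = 2 * Real.pi * (starRingEnd ℂ) (c k) := by
    intro k
    have hexpand : ∀ t : ℝ, Complex.exp (Complex.I * k * t) * (starRingEnd ℂ) (g t)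
        = ∑' l : ℤ, Complex.exp (Complex.I * (k - l) * t) * (starRingEnd ℂ) (c l) := by
      intro t
      rw [hconj t, ← tsum_mul_left]
      apply tsum_congr; intro l
      rw [← mul_assoc, ← Complex.exp_add]
      congr 2
      push_cast
      ring
    rw [MeasureTheory.integral_congr_ae (Filter.Eventually.of_forall hexpand)]
    rw [MeasureTheory.integral_tsum]
    · have hval : ∀ l : ℤ,
          (∫ t in Set.Ioc (0:ℝ) (2*Real.pi),
              Complex.exp (Complex.I * (k - l) * t) * (starRingEnd ℂ) (c l))
            = (starRingEnd ℂ) (c l) * (if k - l = 0 then (2*Real.pi:ℂ) else 0) := by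
        intro l
        have hcast : ((k:ℂ) - l) = ((k - l : ℤ) : ℂ) := by push_cast; ring
        rw [← intervalIntegral.integral_of_le hpi, intervalIntegral.integral_mul_const,
          hcast, orth_int]
        ring
      rw [tsum_congr hval, tsum_eq_single k]
      · simp [mul_comm]
      · intro l hl
        rw [if_neg (by omega), mul_zero]
    · intro l
      exact ((((continuous_const.mul Complex.continuous_ofReal).cexp)).mul
        continuous_const).aestronglyMeasurable
    · apply lint_bound hc
      intro l t
      have hcast : ((k:ℂ) - l) = ((k - l : ℤ) : ℂ) := by push_cast; ring
      simp only [norm_mul, hcast, norm_exp_I_int, one_mul, RingHomIsometric.norm_map]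
      exact le_refl _
  -- outer expansion
  have houter : (∫ t in Set.Ioc (0:ℝ) (2*Real.pi), g t * (starRingEnd ℂ) (g t))
      = 2*Real.pi * ∑' k : ℤ, ((‖c k‖:ℂ)^2) := by
    have hexpand : ∀ t : ℝ, g t * (starRingEnd ℂ) (g t)
        = ∑' k : ℤ, Complex.exp (Complex.I * k * t) * c k * (starRingEnd ℂ) (g t) := by
      intro t
      rw [hg, tsum_mul_right]
    rw [MeasureTheory.integral_congr_ae (Filter.Eventually.of_forall hexpand)]
    rw [MeasureTheory.integral_tsum]
    · have hval : ∀ k : ℤ,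
          (∫ t in Set.Ioc (0:ℝ) (2*Real.pi),
              Complex.exp (Complex.I * k * t) * c k * (starRingEnd ℂ) (g t))
            = 2*Real.pi * ((‖c k‖:ℂ)^2) := by
        intro k
        have : (fun t : ℝ => Complex.exp (Complex.I * k * t) * c k * (starRingEnd ℂ) (g t))
            = fun t : ℝ => c k * (Complex.exp (Complex.I * k * t) * (starRingEnd ℂ) (g t)) := by
          funext t; ring
        rw [this, MeasureTheory.integral_const_mul, hinner k]
        rw [show (c k) * (2*Real.pi * (starRingEnd ℂ) (c k))
            = 2*Real.pi * (c k * (starRingEnd ℂ) (c k)) by ring]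
        rw [Complex.mul_conj]
        congr 1
        rw [← Complex.sq_norm]
        push_cast
        rfl
      rw [tsum_congr hval, tsum_mul_left]
    · intro k
      exact ((((continuous_const.mul Complex.continuous_ofReal).cexp).mul
        continuous_const).mul ((Complex.continuous_conj).comp hgc)).aestronglyMeasurable
    · apply lint_bound (hc.mul_right S)
      intro k t
      simp only [norm_mul, norm_exp_I_int, one_mul, RingHomIsometric.norm_map]
      exact mul_le_mul_of_nonneg_left (hgle t) (norm_nonneg _)
  -- take real parts
  rw [intervalIntegral.integral_of_le hpi]
  have h1 : ∀ t : ℝ, ‖g t‖^2 = (g t * (starRingEnd ℂ) (g t)).re := by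
    intro t
    rw [Complex.mul_conj, Complex.sq_norm, Complex.ofReal_re]
  rw [MeasureTheory.integral_congr_ae (Filter.Eventually.of_forall h1)]
  have hint : MeasureTheory.Integrable (fun t => g t * (starRingEnd ℂ) (g t))
      (volume.restrict (Set.Ioc (0:ℝ) (2*Real.pi))) :=
    (hgc.mul (Complex.continuous_conj.comp hgc)).integrableOn_Ioc
  have h2 := integral_re (𝕜 := ℂ) hint
  simp only [RCLike.re_to_complex] at h2
  rw [h2, houter]
  rw [show (2*Real.pi * ∑' k : ℤ, ((‖c k‖:ℂ)^2)) = ((2*Real.pi : ℝ) : ℂ) * ∑' k : ℤ, (((‖c k‖^2 : ℝ)):ℂ) by push_cast; ring]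
  rw [← Complex.ofReal_tsum, ← Complex.ofReal_mul, Complex.ofReal_re]

lemma net_lemma {Y : Type*} [NormedAddCommGroup Y] [NormedSpace ℂ Y] {K : Set Y}
    (hK : IsCompact K) {ε : ℝ} (hε : 0 < ε) :
    ∃ s : Finset (Y →L[ℂ] ℂ), (∀ φ ∈ s, ‖φ‖ ≤ 1) ∧
      ∀ y ∈ K, ∃ φ ∈ s, ‖y‖ ≤ ‖φ y‖ + 2*ε := by
  classical
  obtain ⟨t, hts, htfin, hcover⟩ := hK.finite_cover_balls hε
  have hchoice : ∀ z : Y, ∃ φ : Y →L[ℂ] ℂ, ‖φ‖ ≤ 1 ∧ (z ≠ 0 → φ z = (‖z‖ : ℂ)) := by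
    intro z
    rcases eq_or_ne z 0 with rfl | hz
    · exact ⟨0, by simp, by simp⟩
    · obtain ⟨φ, hφ1, hφ2⟩ := exists_dual_vector ℂ z (norm_ne_zero_iff.2 hz)
      exact ⟨φ, le_of_eq hφ1, fun _ => hφ2⟩
  choose φf hφf1 hφf2 using hchoice
  refine ⟨htfin.toFinset.image φf, ?_, ?_⟩
  · intro φ hφ
    simp only [Finset.mem_image, Set.Finite.mem_toFinset] at hφ
    obtain ⟨z, _, rfl⟩ := hφ
    exact hφf1 z
  · intro y hy
    obtain ⟨z, hzt, hyz⟩ := Set.mem_iUnion₂.1 (hcover hy)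
    refine ⟨φf z, Finset.mem_image_of_mem _ (htfin.mem_toFinset.2 hzt), ?_⟩
    have hdist : ‖y - z‖ < ε := by
      rw [← dist_eq_norm]
      exact Metric.mem_ball.1 hyz
    rcases eq_or_ne z 0 with rfl | hz
    · have : ‖y‖ < ε := by simpa using hdist
      have h0 : (0:ℝ) ≤ ‖(φf 0) y‖ := norm_nonneg _
      nlinarith
    · have h1 : ‖(φf z) z‖ = ‖z‖ := by
        rw [hφf2 z hz]
        simp
      have h2 : ‖(φf z) z - (φf z) y‖ ≤ ε := by
        rw [← map_sub]
        calc ‖(φf z) (z - y)‖ ≤ ‖φf z‖ * ‖z - y‖ := (φf z).le_opNorm _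
          _ ≤ 1 * ε := by
              apply mul_le_mul (hφf1 z) _ (norm_nonneg _) zero_le_one
              rw [norm_sub_rev]
              exact le_of_lt hdist
          _ = ε := one_mul ε
      have h3 : ‖(φf z) z‖ - ‖(φf z) y‖ ≤ ε := (norm_sub_norm_le _ _).trans h2
      have h4 : ‖y‖ ≤ ‖z‖ + ε := by
        calc ‖y‖ = ‖z + (y - z)‖ := by rw [add_sub_cancel]
          _ ≤ ‖z‖ + ‖y - z‖ := norm_add_le _ _
          _ ≤ ‖z‖ + ε := by linarith
      rw [h1] at h3
      linarith

lemma dual_l1 {X Y : Type*} [NormedAddCommGroup X] [NormedSpace ℂ X] [CompleteSpace X]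
    [NormedAddCommGroup Y] [NormedSpace ℂ Y]
    (T : X →L[ℂ] Y) (hTnorm : ‖T‖ ≤ 1) (v : ℤ → X)
    (hv : ∀ lam : ℤ → ℂ, (∀ k, ‖lam k‖ ≤ 1) →
      Summable (fun k : ℤ => lam k • v k) ∧ ‖∑' k : ℤ, lam k • v k‖ ≤ 1)
    (φ : Y →L[ℂ] ℂ) (hφ : ‖φ‖ ≤ 1) :
    Summable (fun k : ℤ => ‖φ (T (v k))‖) ∧ (∑' k : ℤ, ‖φ (T (v k))‖) ≤ 1 := by
  classical
  set c : ℤ → ℂ := fun k => φ (T (v k)) with hcdef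
  have key : ∀ F : Finset ℤ, ∑ k ∈ F, ‖c k‖ ≤ 1 := by
    intro F
    set lam : ℤ → ℂ := fun k =>
      if k ∈ F then (if c k = 0 then 0 else (starRingEnd ℂ) (c k) / ‖c k‖) else 0 with hlamdef
    have hlam : ∀ k, ‖lam k‖ ≤ 1 := by
      intro k
      rw [hlamdef]
      dsimp only
      split_ifs with h1 h2
      · simp
      · rw [norm_div, RingHomIsometric.norm_map]
        rw [Complex.norm_real, Real.norm_of_nonneg (norm_nonneg _)]
        rw [div_self (norm_ne_zero_iff.2 h2)]
      · simp
    obtain ⟨hsum, hle⟩ := hv lam hlam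
    have htsum : (∑' k : ℤ, lam k • v k) = ∑ k ∈ F, lam k • v k := by
      apply tsum_eq_sum
      intro k hk
      have : lam k = 0 := by rw [hlamdef]; simp [hk]
      rw [this, zero_smul]
    have heval : φ (T (∑ k ∈ F, lam k • v k)) = ((∑ k ∈ F, ‖c k‖ : ℝ) : ℂ) := by
      rw [map_sum, map_sum]
      push_cast
      apply Finset.sum_congr rfl
      intro k hk
      rw [T.map_smul, φ.map_smul]
      rw [smul_eq_mul]
      rw [hlamdef]
      dsimp only
      rw [if_pos hk]
      split_ifs with h2
      · simp [h2]
      · rw [div_mul_eq_mul_div, mul_comm, Complex.mul_conj, Complex.normSq_eq_norm_sq]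
        push_cast
        rw [pow_two, mul_div_assoc, div_self (by exact_mod_cast norm_ne_zero_iff.2 h2), mul_one]
    have : (∑ k ∈ F, ‖c k‖) = ‖φ (T (∑ k ∈ F, lam k • v k))‖ := by
      rw [heval, Complex.norm_real, Real.norm_of_nonneg (Finset.sum_nonneg fun k _ => norm_nonneg _)]
    rw [this]
    calc ‖φ (T (∑ k ∈ F, lam k • v k))‖ ≤ ‖φ‖ * ‖T (∑ k ∈ F, lam k • v k)‖ := φ.le_opNorm _
      _ ≤ 1 * (‖T‖ * ‖∑ k ∈ F, lam k • v k‖) := by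
          apply mul_le_mul hφ (T.le_opNorm _) (norm_nonneg _) zero_le_one
      _ ≤ 1 * (1 * 1) := by
          apply mul_le_mul_of_nonneg_left _ zero_le_one
          apply mul_le_mul hTnorm _ (norm_nonneg _) (le_trans (norm_nonneg T) hTnorm)
          rw [← htsum]
          exact hle
      _ = 1 := by ring
  have hsummable : Summable fun k : ℤ => ‖c k‖ :=
    summable_of_sum_le (fun k => norm_nonneg _) key
  exact ⟨hsummable, hsummable.tsum_le_of_sum_le key⟩

theorem stmt5 {X Y : Type*} [NormedAddCommGroup X] [NormedSpace ℂ X] [CompleteSpace X]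
    [NormedAddCommGroup Y] [NormedSpace ℂ Y] [CompleteSpace Y]
    (T : X →L[ℂ] Y) (hT : IsCompactOperator T) (hTnorm : ‖T‖ ≤ 1)
    (x : ℕ → ℤ → X)
    (hx : ∀ (n : ℕ) (lam : ℤ → ℂ), (∀ k, ‖lam k‖ ≤ 1) →
      Summable (fun k : ℤ => lam k • x n k) ∧ ‖∑' k : ℤ, lam k • x n k‖ ≤ 1)
    (hsup : Tendsto (fun n => ⨆ k : ℤ, ‖T (x n k)‖) atTop (𝓝 0)) :
    Tendsto (fun n => (2 * Real.pi)⁻¹ *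
        ∫ t in (0:ℝ)..(2 * Real.pi),
          ‖∑' k : ℤ, Complex.exp (Complex.I * k * t) • T (x n k)‖ ^ 2)
      atTop (𝓝 0) := by
  classical
  have hpi : (0:ℝ) < 2*Real.pi := by positivity
  have hx1 : ∀ n k, ‖x n k‖ ≤ 1 := by
    intro n k
    have h := hx n (fun j => if j = k then 1 else 0)
      (by intro j; split_ifs <;> simp)
    have he : (∑' j : ℤ, (if j = k then (1:ℂ) else 0) • x n j) = x n k := by
      rw [tsum_eq_single k]
      · simp
      · intro j hj; simp [hj]
    have h2 := h.2
    rwa [he] at h2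
  have hTx1 : ∀ n k, ‖T (x n k)‖ ≤ 1 := by
    intro n k
    calc ‖T (x n k)‖ ≤ ‖T‖ * ‖x n k‖ := T.le_opNorm _
      _ ≤ 1 * 1 := mul_le_mul hTnorm (hx1 n k) (norm_nonneg _) zero_le_one
      _ = 1 := one_mul 1
  have hbdd : ∀ n, BddAbove (Set.range fun k : ℤ => ‖T (x n k)‖) := fun n =>
    ⟨1, by rintro _ ⟨k, rfl⟩; exact hTx1 n k⟩
  have hsle : ∀ n k, ‖T (x n k)‖ ≤ ⨆ j : ℤ, ‖T (x n j)‖ := fun n k => le_ciSup (hbdd n) k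
  have hs0 : ∀ n, 0 ≤ ⨆ j : ℤ, ‖T (x n j)‖ := fun n => le_trans (norm_nonneg _) (hsle n 0)
  have hexp1 : ∀ (k : ℤ) (t : ℝ), ‖Complex.exp (Complex.I*k*t)‖ ≤ 1 :=
    fun k t => le_of_eq (norm_exp_I_int k t)
  have hsumX : ∀ n (t : ℝ), Summable fun k : ℤ => Complex.exp (Complex.I*k*t) • x n k :=
    fun n t => (hx n _ (fun k => hexp1 k t)).1
  have hsumY : ∀ n (t : ℝ), Summable fun k : ℤ => Complex.exp (Complex.I*k*t) • T (x n k) := by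
    intro n t
    apply Summable.congr ((hsumX n t).map T.toLinearMap.toAddMonoidHom T.continuous)
    intro k
    exact T.map_smul _ _
  have hf_eq : ∀ n (t : ℝ), (∑' k : ℤ, Complex.exp (Complex.I*k*t) • T (x n k))
      = T (∑' k : ℤ, Complex.exp (Complex.I*k*t) • x n k) := by
    intro n t
    rw [ContinuousLinearMap.map_tsum T (hsumX n t)]
    exact tsum_congr fun k => (T.map_smul _ _).symm
  have hf_mem : ∀ n (t : ℝ), (∑' k : ℤ, Complex.exp (Complex.I*k*t) • T (x n k))
      ∈ closure (T '' Metric.closedBall (0:X) 1) := by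
    intro n t
    rw [hf_eq]
    apply subset_closure
    refine ⟨_, ?_, rfl⟩
    rw [Metric.mem_closedBall, dist_zero_right]
    exact (hx n _ fun k => hexp1 k t).2
  have hf_le1 : ∀ n (t : ℝ), ‖∑' k : ℤ, Complex.exp (Complex.I*k*t) • T (x n k)‖ ≤ 1 := by
    intro n t
    rw [hf_eq]
    calc ‖T _‖ ≤ ‖T‖ * ‖(∑' k : ℤ, Complex.exp (Complex.I*k*t) • x n k)‖ := T.le_opNorm _
      _ ≤ 1 * 1 := mul_le_mul hTnorm ((hx n _ fun k => hexp1 k t).2) (norm_nonneg _) zero_le_one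
      _ = 1 := one_mul 1
  have hmeasf : ∀ n, StronglyMeasurable
      (fun t : ℝ => ∑' k : ℤ, Complex.exp (Complex.I*k*t) • T (x n k)) :=
    fun n => meas_tsum _ (hsumY n)
  have hintf : ∀ n, IntervalIntegrable
      (fun t : ℝ => ‖∑' k : ℤ, Complex.exp (Complex.I*k*t) • T (x n k)‖^2)
      volume 0 (2*Real.pi) := by
    intro n
    rw [intervalIntegrable_iff_integrableOn_Ioc_of_le hpi.le]
    apply MeasureTheory.Integrable.mono' (g := fun _ => (1:ℝ)) (integrable_const 1)
    · exact ((continuous_pow 2).comp_stronglyMeasurable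
        (hmeasf n).norm).aestronglyMeasurable
    · filter_upwards with t
      rw [Real.norm_of_nonneg (by positivity)]
      calc ‖∑' k : ℤ, Complex.exp (Complex.I*k*t) • T (x n k)‖^2 ≤ 1^2 := by
            apply pow_le_pow_left₀ (norm_nonneg _) (hf_le1 n t)
        _ = 1 := one_pow 2
  rw [Metric.tendsto_atTop]
  intro ε hε
  set K := closure (T '' Metric.closedBall (0:X) 1) with hKdef
  have hKc : IsCompact K := hT.isCompact_closure_image_of_bounded Metric.isBounded_closedBall
  set ε' : ℝ := min 1 (ε/17) with hε'def
  have hε'pos : 0 < ε' := lt_min one_pos (by positivity)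
  obtain ⟨s, hs1, hs2⟩ := net_lemma hKc hε'pos
  obtain ⟨N, hN⟩ := (Metric.tendsto_atTop.1 hsup) (ε/(4*(s.card+1))) (by positivity)
  refine ⟨N, fun n hn => ?_⟩
  set sn := ⨆ j : ℤ, ‖T (x n j)‖ with hsndef
  have hsnlt : sn < ε/(4*(s.card+1)) := by
    have h := hN n hn
    rwa [Real.dist_eq, sub_zero, abs_of_nonneg (hs0 n)] at h
  have hl1 : ∀ φ ∈ s, Summable (fun k : ℤ => ‖φ (T (x n k))‖) ∧
      (∑' k : ℤ, ‖φ (T (x n k))‖) ≤ 1 :=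
    fun φ hφ => dual_l1 T hTnorm (x n) (hx n) φ (hs1 φ hφ)
  have hφf : ∀ (φ : Y →L[ℂ] ℂ) (t : ℝ),
      φ (∑' k : ℤ, Complex.exp (Complex.I*k*t) • T (x n k))
        = ∑' k : ℤ, Complex.exp (Complex.I*k*t) * φ (T (x n k)) := by
    intro φ t
    rw [ContinuousLinearMap.map_tsum φ (hsumY n t)]
    exact tsum_congr fun k => by rw [φ.map_smul, smul_eq_mul]
  set G : ℝ → ℝ := fun t =>
    2 * ∑ φ ∈ s, ‖∑' k : ℤ, Complex.exp (Complex.I*k*t) * φ (T (x n k))‖^2 + 8*ε'^2 with hGdef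
  have hpt : ∀ t : ℝ, ‖∑' k : ℤ, Complex.exp (Complex.I*k*t) • T (x n k)‖^2 ≤ G t := by
    intro t
    obtain ⟨φ, hφs, hle⟩ := hs2 _ (hf_mem n t)
    have h1 : ‖φ (∑' k : ℤ, Complex.exp (Complex.I*k*t) • T (x n k))‖^2
        ≤ ∑ ψ ∈ s, ‖∑' k : ℤ, Complex.exp (Complex.I*k*t) * ψ (T (x n k))‖^2 := by
      rw [hφf φ t]
      exact Finset.single_le_sum (f := fun ψ : Y →L[ℂ] ℂ =>
        ‖∑' k : ℤ, Complex.exp (Complex.I*k*t) * ψ (T (x n k))‖^2)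
        (fun ψ _ => by positivity) hφs
    have h2 : ‖(∑' k : ℤ, Complex.exp (Complex.I*k*t) • T (x n k))‖^2
        ≤ 2 * ‖φ (∑' k : ℤ, Complex.exp (Complex.I*k*t) • T (x n k))‖^2 + 8*ε'^2 := by
      nlinarith [hle, norm_nonneg (∑' k : ℤ, Complex.exp (Complex.I*k*t) • T (x n k)),
        norm_nonneg (φ (∑' k : ℤ, Complex.exp (Complex.I*k*t) • T (x n k))), hε'pos.le,
        sq_nonneg (‖φ (∑' k : ℤ, Complex.exp (Complex.I*k*t) • T (x n k))‖ - 2*ε')]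
    rw [hGdef]
    dsimp only
    linarith
  have hGcont : Continuous G := by
    rw [hGdef]
    apply Continuous.add _ continuous_const
    apply continuous_const.mul
    apply continuous_finset_sum
    intro φ hφ
    exact ((continuous_g (hl1 φ hφ).1).norm).pow 2
  have hper : ∀ φ ∈ s,
      (∫ t in (0:ℝ)..(2*Real.pi), ‖∑' k : ℤ, Complex.exp (Complex.I*k*t) * φ (T (x n k))‖^2)
        ≤ 2*Real.pi * sn := by
    intro φ hφ
    rw [parseval_core (hl1 φ hφ).1]
    apply mul_le_mul_of_nonneg_left _ hpi.le
    have hck : ∀ k : ℤ, ‖φ (T (x n k))‖ ≤ sn := by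
      intro k
      calc ‖φ (T (x n k))‖ ≤ ‖φ‖ * ‖T (x n k)‖ := φ.le_opNorm _
        _ ≤ 1 * sn := mul_le_mul (hs1 φ hφ) (hsle n k) (norm_nonneg _) zero_le_one
        _ = sn := one_mul sn
    have hsum2 : Summable (fun k : ℤ => ‖φ (T (x n k))‖^2) := by
      apply Summable.of_nonneg_of_le (fun k => sq_nonneg _) _ ((hl1 φ hφ).1.mul_left sn)
      intro k
      rw [pow_two]
      exact mul_le_mul_of_nonneg_right (hck k) (norm_nonneg _)
    calc ∑' k : ℤ, ‖φ (T (x n k))‖^2 ≤ ∑' k : ℤ, sn * ‖φ (T (x n k))‖ := by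
          apply Summable.tsum_le_tsum _ hsum2 ((hl1 φ hφ).1.mul_left sn)
          intro k
          rw [pow_two]
          exact mul_le_mul_of_nonneg_right (hck k) (norm_nonneg _)
      _ = sn * ∑' k : ℤ, ‖φ (T (x n k))‖ := tsum_mul_left
      _ ≤ sn * 1 := mul_le_mul_of_nonneg_left (hl1 φ hφ).2 (hs0 n)
      _ = sn := mul_one sn
  have hmono : (∫ t in (0:ℝ)..(2*Real.pi),
        ‖∑' k : ℤ, Complex.exp (Complex.I*k*t) • T (x n k)‖^2)
      ≤ ∫ t in (0:ℝ)..(2*Real.pi), G t :=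
    intervalIntegral.integral_mono_on hpi.le (hintf n) (hGcont.intervalIntegrable _ _)
      (fun t _ => hpt t)
  have hGint : (∫ t in (0:ℝ)..(2*Real.pi), G t)
      ≤ 2*Real.pi * (2 * s.card * sn + 8*ε'^2) := by
    rw [hGdef]
    have hc1 : Continuous (fun t : ℝ =>
        2 * ∑ φ ∈ s, ‖∑' k : ℤ, Complex.exp (Complex.I*k*t) * φ (T (x n k))‖^2) := by
      apply continuous_const.mul
      apply continuous_finset_sum
      intro φ hφ
      exact ((continuous_g (hl1 φ hφ).1).norm).pow 2
    rw [intervalIntegral.integral_add (hc1.intervalIntegrable _ _)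
      (intervalIntegrable_const), intervalIntegral.integral_const_mul,
      intervalIntegral.integral_finset_sum (fun φ hφ =>
        (Continuous.intervalIntegrable (u := fun t : ℝ =>
          ‖∑' k : ℤ, Complex.exp (Complex.I*k*t) * φ (T (x n k))‖^2)
          ((continuous_g (hl1 φ hφ).1).norm.pow 2) _ _)),
      intervalIntegral.integral_const]
    have hsum_le : (∑ φ ∈ s, ∫ t in (0:ℝ)..(2*Real.pi),
        ‖∑' k : ℤ, Complex.exp (Complex.I*k*t) * φ (T (x n k))‖^2)
        ≤ ∑ _φ ∈ s, 2*Real.pi * sn := Finset.sum_le_sum hper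
    rw [Finset.sum_const, nsmul_eq_mul] at hsum_le
    have h8 : ((2*Real.pi - 0) • (8*ε'^2) : ℝ) = 2*Real.pi * (8*ε'^2) := by
      rw [smul_eq_mul, sub_zero]
    rw [h8]
    nlinarith [hsum_le, hs0 n, hε'pos.le, Real.pi_pos]
  have hInn : 0 ≤ ∫ t in (0:ℝ)..(2*Real.pi),
      ‖∑' k : ℤ, Complex.exp (Complex.I*k*t) • T (x n k)‖^2 :=
    intervalIntegral.integral_nonneg hpi.le (fun t _ => by positivity)
  rw [Real.dist_eq, sub_zero, abs_of_nonneg (by positivity)]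
  have hfin : (2*Real.pi)⁻¹ * (∫ t in (0:ℝ)..(2*Real.pi),
        ‖∑' k : ℤ, Complex.exp (Complex.I*k*t) • T (x n k)‖^2)
      ≤ 2 * s.card * sn + 8*ε'^2 := by
    calc (2*Real.pi)⁻¹ * (∫ t in (0:ℝ)..(2*Real.pi),
          ‖∑' k : ℤ, Complex.exp (Complex.I*k*t) • T (x n k)‖^2)
        ≤ (2*Real.pi)⁻¹ * (2*Real.pi * (2 * s.card * sn + 8*ε'^2)) :=
          mul_le_mul_of_nonneg_left (hmono.trans hGint) (by positivity)
      _ = 2 * s.card * sn + 8*ε'^2 := by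
          rw [← mul_assoc, inv_mul_cancel₀ hpi.ne', one_mul]
  have hsnlt' : sn * (4*(s.card+1)) < ε := by
    rw [lt_div_iff₀ (by positivity)] at hsnlt
    exact hsnlt
  have hnum : 2 * (s.card:ℝ) * sn + 8*ε'^2 < ε := by
    have hm1 : ε' ≤ 1 := min_le_left _ _
    have hm2 : ε' ≤ ε/17 := min_le_right _ _
    have hcnn : (0:ℝ) ≤ (s.card:ℝ) := Nat.cast_nonneg _
    nlinarith [hs0 n, hε'pos, hε, mul_le_mul hm1 hm2 hε'pos.le zero_le_one]
  exact lt_of_le_of_lt hfin hnum
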